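/- A dagger kernel category is Boolean (i.e. m ∧ n = 0 implies m† ∘ n = 0 for all kernels m, n) if and only if every orthomodular lattice KSub(X) is a Boolean algebra (i.e. distributive). -/
import Mathlib


open CategoryTheory Limits

universe v u

class Dagger (C : Type u) [Category.{v} C] [HasZeroMorphisms C] where
  dag : ∀ {X Y : C}, (X ⟶ Y) → (Y ⟶ X)
  dag_dag : ∀ {X Y : C} (f : X ⟶ Y), dag (dag f) = f
  dag_comp : ∀ {X Y Z : C} (f : X ⟶ Y) (g : Y ⟶ Z), dag (f ≫ g) = dag g ≫ dag f
  dag_id : ∀ (X : C), dag (𝟙 X) = 𝟙 X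
  dag_zero : ∀ (X Y : C), dag (0 : X ⟶ Y) = 0

namespace Dagger

variable {C : Type u} [Category.{v} C] [HasZeroMorphisms C] [Dagger C]

/-- `f` is a dagger mono: `f† ∘ f = id`. -/
def DaggerMono {X Y : C} (f : X ⟶ Y) : Prop := f ≫ dag f = 𝟙 X

/-- `f` is a dagger epi: `f ∘ f† = id`. -/
def DaggerEpi {X Y : C} (f : X ⟶ Y) : Prop := dag f ≫ f = 𝟙 Y

/-- `k` is a kernel of `f`. -/
structure IsKer {K X Y : C} (f : X ⟶ Y) (k : K ⟶ X) : Prop where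
  comp_zero : k ≫ f = 0
  lift : ∀ {Z : C} (g : Z ⟶ X), g ≫ f = 0 → ∃! h : Z ⟶ K, h ≫ k = g

/-- `k` is a kernel of `f` which is moreover a dagger mono. -/
def IsDagKer {K X Y : C} (f : X ⟶ Y) (k : K ⟶ X) : Prop :=
  IsKer f k ∧ DaggerMono k

/-- `k` is a (dagger-monic) kernel of some map. -/
def KernelMap {K X : C} (k : K ⟶ X) : Prop :=
  ∃ (Y : C) (f : X ⟶ Y), IsDagKer f k

/-- order of subobjects, by factorisation -/
def SubLE {M N X : C} (m : M ⟶ X) (n : N ⟶ X) : Prop :=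
  ∃ φ : M ⟶ N, φ ≫ n = m

/-- equality of subobjects -/
def SubEq {M N X : C} (m : M ⟶ X) (n : N ⟶ X) : Prop :=
  SubLE m n ∧ SubLE n m

/-- `p` represents the orthocomplement `m^⊥ = ker(m†)` of `m`. -/
def IsOrthoOf {M P X : C} (m : M ⟶ X) (p : P ⟶ X) : Prop :=
  IsDagKer (dag m) p

/-- `w` is the meet (intersection) of the kernels `m` and `n` in `KSub(X)`. -/
def IsMeet {M N W X : C} (m : M ⟶ X) (n : N ⟶ X) (w : W ⟶ X) : Prop :=
  KernelMap w ∧ SubLE w m ∧ SubLE w n ∧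
    ∀ {K : C} (k : K ⟶ X), KernelMap k → SubLE k m → SubLE k n → SubLE k w

/-- `j` is the join `m ∨ n = (m^⊥ ∧ n^⊥)^⊥` in `KSub(X)`. -/
def IsJoin {M N J X : C} (m : M ⟶ X) (n : N ⟶ X) (j : J ⟶ X) : Prop :=
  ∃ (MP NP W : C) (mp : MP ⟶ X) (np : NP ⟶ X) (w : W ⟶ X),
    IsOrthoOf m mp ∧ IsOrthoOf n np ∧ IsMeet mp np w ∧ IsOrthoOf w j

/-- `p` represents the pullback `f⁻¹(n) = ker(coker(n) ∘ f)` of the kernel `n` along `f`. -/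
def IsInvImg {N P X Y : C} (f : X ⟶ Y) (n : N ⟶ Y) (p : P ⟶ X) : Prop :=
  ∃ (NP : C) (np : NP ⟶ Y), IsOrthoOf n np ∧ IsDagKer (f ≫ dag np) p

/-- `i` represents the image `ker(coker(f)) = ker(ker(f†)†)` of `f`. -/
def IsImg {I X Y : C} (f : X ⟶ Y) (i : I ⟶ Y) : Prop :=
  ∃ (K : C) (k : K ⟶ Y), IsDagKer (dag f) k ∧ IsDagKer (dag k) i

/-- zero-mono: `m ∘ f = 0` implies `f = 0`. -/
def ZeroMono {X Y : C} (m : X ⟶ Y) : Prop :=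
  ∀ {Z : C} (f : Z ⟶ X), f ≫ m = 0 → f = 0

/-- zero-epi: `f ∘ e = 0` implies `f = 0`. -/
def ZeroEpi {X Y : C} (e : X ⟶ Y) : Prop :=
  ∀ {Z : C} (f : Y ⟶ Z), e ≫ f = 0 → f = 0

end Dagger

/-- A dagger kernel category: a dagger category with a zero object in which
every morphism has a kernel that is a dagger mono. -/
class DagKerCat (C : Type u) [Category.{v} C] [HasZeroMorphisms C]
    [HasZeroObject C] extends Dagger C where
  hasKer : ∀ {X Y : C} (f : X ⟶ Y), ∃ (K : C) (k : K ⟶ X), Dagger.IsDagKer f k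

namespace Dagger

variable {C : Type u} [Category.{v} C] [HasZeroMorphisms C] [HasZeroObject C] [DagKerCat C]

/-- dagger monos are (split) monos. -/
lemma dmono_cancel {X Y Z : C} {f : X ⟶ Y} (hf : DaggerMono f)
    {g h : Z ⟶ X} (e : g ≫ f = h ≫ f) : g = h := by
  have e2 : (g ≫ f) ≫ dag f = (h ≫ f) ≫ dag f := by rw [e]
  rw [Category.assoc, Category.assoc, (hf : f ≫ dag f = 𝟙 X), Category.comp_id,
    Category.comp_id] at e2
  exact e2

lemma subLE_refl {M X : C} (m : M ⟶ X) : SubLE m m := ⟨𝟙 M, Category.id_comp m⟩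

lemma subLE_trans {A B D X : C} {a : A ⟶ X} {b : B ⟶ X} {d : D ⟶ X}
    (h1 : SubLE a b) (h2 : SubLE b d) : SubLE a d := by
  obtain ⟨φ, hφ⟩ := h1; obtain ⟨ψ, hψ⟩ := h2
  exact ⟨φ ≫ ψ, by rw [Category.assoc, hψ, hφ]⟩

/-- the defining equation `k ≫ f = 0` of a kernel. -/
lemma kz {K X Y : C} {f : X ⟶ Y} {k : K ⟶ X} (h : IsDagKer f k) : k ≫ f = 0 :=
  h.1.comp_zero

/-- anything killed by `f` factors through a kernel of `f`. -/
lemma factorThru {K X Y Z : C} {f : X ⟶ Y} {k : K ⟶ X} (h : IsDagKer f k)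
    {g : Z ⟶ X} (hg : g ≫ f = 0) : SubLE g k := by
  obtain ⟨φ, hφ, -⟩ := h.1.lift g hg
  exact ⟨φ, hφ⟩

lemma kernelMap_dmono {K X : C} {k : K ⟶ X} (h : KernelMap k) : DaggerMono k := by
  obtain ⟨Y, f, hf⟩ := h; exact hf.2

lemma dag_swap_zero {X Y Z : C} {f : X ⟶ Y} {g : Z ⟶ Y} (h : f ≫ dag g = 0) :
    g ≫ dag f = 0 := by
  have e := congrArg dag h
  rw [dag_comp, dag_dag, dag_zero] at e
  exact e

/-- a kernel is a kernel of (the dagger of) its orthocomplement: `m = m^⊥⊥`. -/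
lemma ortho_ortho {M P X Y : C} {f : X ⟶ Y} {m : M ⟶ X} {p : P ⟶ X}
    (hm : IsDagKer f m) (hp : IsDagKer (dag m) p) : IsDagKer (dag p) m := by
  refine ⟨⟨?_, ?_⟩, hm.2⟩
  · exact dag_swap_zero (kz hp)
  · intro Z g hg
    have hdf : dag f ≫ dag m = 0 := by rw [← dag_comp, kz hm, dag_zero]
    obtain ⟨u, hu⟩ := factorThru hp hdf
    have hgf : g ≫ f = 0 := by
      rw [← dag_dag f, ← hu, dag_comp, ← Category.assoc, hg, zero_comp]
    exact hm.1.lift g hgf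

/-- composition of kernels is a kernel. -/
lemma kernelMap_comp {K M X : C} {k : K ⟶ M} {m : M ⟶ X}
    (hk : KernelMap k) (hm : KernelMap m) : KernelMap (k ≫ m) := by
  obtain ⟨Yk, g, hg⟩ := hk
  obtain ⟨Ym, f, hf⟩ := hm
  obtain ⟨L, l, hl⟩ := DagKerCat.hasKer (dag (k ≫ m))
  have dmk : DaggerMono (k ≫ m) := by
    show (k ≫ m) ≫ dag (k ≫ m) = 𝟙 K
    rw [dag_comp, Category.assoc, ← Category.assoc m, (hf.2 : m ≫ dag m = 𝟙 M),
      Category.id_comp, (hg.2 : k ≫ dag k = 𝟙 K)]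
  refine ⟨L, dag l, ⟨?_, ?_⟩, dmk⟩
  · exact dag_swap_zero (kz hl)
  · intro Z x hx
    obtain ⟨P, q, hq⟩ := DagKerCat.hasKer (dag m)
    have hmq : IsDagKer (dag q) m := ortho_ortho hf hq
    -- q factors through l
    have hql : SubLE q l := by
      apply factorThru hl
      rw [dag_comp, ← Category.assoc, kz hq, zero_comp]
    -- hence x ≫ dag q = 0 and x factors through m
    have hxq : x ≫ dag q = 0 := by
      obtain ⟨v, hv⟩ := hql
      rw [← hv, dag_comp, ← Category.assoc, hx, zero_comp]
    obtain ⟨y, hy, -⟩ := hmq.1.lift x hxq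
    -- dag g ≫ m factors through l
    have hgl : SubLE (dag g ≫ m) l := by
      apply factorThru hl
      rw [dag_comp, Category.assoc, ← Category.assoc m, (hf.2 : m ≫ dag m = 𝟙 M),
        Category.id_comp, ← dag_comp, kz hg, dag_zero]
    -- hence x ≫ dag m ≫ g = 0
    have hxg : x ≫ (dag m ≫ g) = 0 := by
      obtain ⟨u, hu⟩ := hgl
      have : dag m ≫ g = dag l ≫ dag u := by
        rw [← dag_comp, hu, dag_comp, dag_dag]
      rw [this, ← Category.assoc, hx, zero_comp]
    have hyg : y ≫ g = 0 := by
      have : y ≫ g = y ≫ (m ≫ dag m) ≫ g := by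
        rw [(hf.2 : m ≫ dag m = 𝟙 M), Category.id_comp]
      rw [this, Category.assoc, ← Category.assoc m, ← Category.assoc y,
        ← Category.assoc y, hy, Category.assoc, hxg]
    obtain ⟨h, hh, -⟩ := hg.1.lift y hyg
    refine ⟨h, ?_, ?_⟩
    · show h ≫ k ≫ m = x
      rw [← Category.assoc, hh, hy]
    · intro h' hh'
      have hh'2 : h' ≫ k ≫ m = x := hh'
      exact dmono_cancel dmk (by rw [hh'2, ← Category.assoc, hh, hy])

/-- meets of kernel subobjects exist. -/
lemma exists_meet {M N X : C} {m : M ⟶ X} {n : N ⟶ X}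
    (hm : KernelMap m) (hn : KernelMap n) : ∃ (W : C) (w : W ⟶ X), IsMeet m n w := by
  obtain ⟨Yn, g, hg⟩ := hn
  obtain ⟨P, p, hp⟩ := DagKerCat.hasKer (dag n)
  have hnp : IsDagKer (dag p) n := ortho_ortho hg hp
  obtain ⟨K, k, hk⟩ := DagKerCat.hasKer (m ≫ dag p)
  refine ⟨K, k ≫ m, kernelMap_comp ⟨_, _, hk⟩ hm, ⟨k, rfl⟩, ?_, ?_⟩
  · apply factorThru hnp
    rw [Category.assoc]; exact kz hk
  · intro K' x hx hxm hxn
    obtain ⟨φ, hφ⟩ := hxm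
    obtain ⟨ψ, hψ⟩ := hxn
    have hφ0 : φ ≫ (m ≫ dag p) = 0 := by
      rw [← Category.assoc, hφ, ← hψ, Category.assoc, kz hnp, comp_zero]
    obtain ⟨χ, hχ⟩ := factorThru hk hφ0
    exact ⟨χ, by rw [← Category.assoc, hχ, hφ]⟩

lemma meet_symm {M N W X : C} {m : M ⟶ X} {n : N ⟶ X} {w : W ⟶ X}
    (h : IsMeet m n w) : IsMeet n m w :=
  ⟨h.1, h.2.2.1, h.2.1, fun k hk h1 h2 => h.2.2.2 k hk h2 h1⟩

/-- if `w ≤ a`, `w ≤ p` and `p ⊥ a` then `w = 0`. -/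
lemma le_le_ortho_zero {W A P X : C} {w : W ⟶ X} {a : A ⟶ X} {p : P ⟶ X}
    (h1 : SubLE w a) (h2 : SubLE w p) (hpa : p ≫ dag a = 0) (ha : DaggerMono a) :
    w = 0 := by
  obtain ⟨φ, hφ⟩ := h1; obtain ⟨ψ, hψ⟩ := h2
  have hφ0 : φ = 0 := by
    calc φ = φ ≫ (a ≫ dag a) := by rw [(ha : a ≫ dag a = 𝟙 A), Category.comp_id]
    _ = (ψ ≫ p) ≫ dag a := by rw [← Category.assoc, hφ, ← hψ]
    _ = ψ ≫ (p ≫ dag a) := by rw [Category.assoc]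
    _ = 0 := by rw [hpa, comp_zero]
  rw [← hφ, hφ0, zero_comp]

lemma join_le_left {M N J X : C} {m : M ⟶ X} {n : N ⟶ X} {j : J ⟶ X}
    (hj : IsJoin m n j) : SubLE m j := by
  obtain ⟨MP, NP, W, mp, np, w, hmp, hnp, hw, hwj⟩ := hj
  apply factorThru hwj
  obtain ⟨φ, hφ⟩ := hw.2.1
  have hmmp : m ≫ dag mp = 0 := dag_swap_zero (kz hmp)
  rw [← hφ, dag_comp, ← Category.assoc, hmmp, zero_comp]

lemma join_le_right {M N J X : C} {m : M ⟶ X} {n : N ⟶ X} {j : J ⟶ X}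
    (hj : IsJoin m n j) : SubLE n j := by
  obtain ⟨MP, NP, W, mp, np, w, hmp, hnp, hw, hwj⟩ := hj
  apply factorThru hwj
  obtain ⟨φ, hφ⟩ := hw.2.2.1
  have hnnp : n ≫ dag np = 0 := dag_swap_zero (kz hnp)
  rw [← hφ, dag_comp, ← Category.assoc, hnnp, zero_comp]

lemma join_lub {M N J A X : C} {m : M ⟶ X} {n : N ⟶ X} {j : J ⟶ X} {x : A ⟶ X}
    (hj : IsJoin m n j) (hx : KernelMap x) (h1 : SubLE m x) (h2 : SubLE n x) :
    SubLE j x := by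
  obtain ⟨MP, NP, W, mp, np, w, hmp, hnp, hw, hwj⟩ := hj
  obtain ⟨Yx, f, hf⟩ := hx
  obtain ⟨S, s, hs⟩ := DagKerCat.hasKer (dag x)
  have hxs : IsDagKer (dag s) x := ortho_ortho hf hs
  have hsmp : SubLE s mp := by
    apply factorThru hmp
    obtain ⟨φ, hφ⟩ := h1
    rw [← hφ, dag_comp, ← Category.assoc, kz hs, zero_comp]
  have hsnp : SubLE s np := by
    apply factorThru hnp
    obtain ⟨φ, hφ⟩ := h2
    rw [← hφ, dag_comp, ← Category.assoc, kz hs, zero_comp]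
  have hsw : SubLE s w := hw.2.2.2 s ⟨_, _, hs⟩ hsmp hsnp
  apply factorThru hxs
  obtain ⟨v, hv⟩ := hsw
  rw [← hv, dag_comp, ← Category.assoc, kz hwj, zero_comp]

end Dagger

open Dagger in
/-- a dagger kernel category is Boolean (`m ∧ n = 0` implies
`m† ∘ n = 0` for kernels) iff every `KSub(X)` is a Boolean algebra
(i.e. distributive). -/
theorem stmt15 {C : Type u} [Category.{v} C] [HasZeroMorphisms C] [HasZeroObject C]
    [DagKerCat C] :
    (∀ {M N X : C} (m : M ⟶ X) (n : N ⟶ X), KernelMap m → KernelMap n →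
      (∀ {W : C} (w : W ⟶ X), IsMeet m n w → w = 0) →
      n ≫ Dagger.dag m = 0)
    ↔
    (∀ {X M N K J A B D E : C} (m : M ⟶ X) (n : N ⟶ X) (k : K ⟶ X),
      KernelMap m → KernelMap n → KernelMap k →
      ∀ (j : J ⟶ X) (a : A ⟶ X) (b : B ⟶ X) (c : D ⟶ X) (d : E ⟶ X),
        IsJoin n k j → IsMeet m j a → IsMeet m n b → IsMeet m k c →
        IsJoin b c d → SubEq a d) := by
  constructor
  · -- Boolean ⟹ distributive
    intro hB X M N K J A B D E m n k hm hn hk j a b c d hj ha hb hc hd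
    -- d is a kernel map
    obtain ⟨QB, QC, W1, qb, qc, w1, hqb, hqc, hw1, hw1d⟩ := hd
    have hdJ : IsJoin b c d := ⟨QB, QC, W1, qb, qc, w1, hqb, hqc, hw1, hw1d⟩
    have hdK : KernelMap d := ⟨_, _, hw1d⟩
    -- d ≤ a
    have hnj : SubLE n j := join_le_left hj
    have hkj : SubLE k j := join_le_right hj
    have hba : SubLE b a := ha.2.2.2 b hb.1 hb.2.1 (subLE_trans hb.2.2.1 hnj)
    have hca : SubLE c a := ha.2.2.2 c hc.1 hc.2.1 (subLE_trans hc.2.2.1 hkj)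
    have hda : SubLE d a := join_lub hdJ ha.1 hba hca
    -- a ≤ d, via the Boolean property
    obtain ⟨D', d', hd'⟩ := DagKerCat.hasKer (dag d)
    have hdd : IsDagKer (dag d') d := ortho_ortho hw1d hd'
    have H : ∀ {W : C} (w : W ⟶ X), IsMeet d' a w → w = 0 := by
      intro W w hw
      have hwd' : SubLE w d' := hw.2.1
      have hwa : SubLE w a := hw.2.2.1
      have hwm : SubLE w m := subLE_trans hwa ha.2.1
      have hwj2 : SubLE w j := subLE_trans hwa ha.2.2.1
      -- w ⊥ n
      have Hn : ∀ {V : C} (v : V ⟶ X), IsMeet w n v → v = 0 := by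
        intro V v hv
        have hvb : SubLE v b :=
          hb.2.2.2 v hv.1 (subLE_trans hv.2.1 hwm) hv.2.2.1
        have hvd : SubLE v d := subLE_trans hvb (join_le_left hdJ)
        have hvd' : SubLE v d' := subLE_trans hv.2.1 hwd'
        exact le_le_ortho_zero hvd hvd' (kz hd') (kernelMap_dmono hdK)
      have hnw : n ≫ dag w = 0 := hB w n hw.1 hn Hn
      have hwn : w ≫ dag n = 0 := dag_swap_zero hnw
      -- w ⊥ k
      have Hk : ∀ {V : C} (v : V ⟶ X), IsMeet w k v → v = 0 := by
        intro V v hv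
        have hvc : SubLE v c :=
          hc.2.2.2 v hv.1 (subLE_trans hv.2.1 hwm) hv.2.2.1
        have hvd : SubLE v d := subLE_trans hvc (join_le_right hdJ)
        have hvd' : SubLE v d' := subLE_trans hv.2.1 hwd'
        exact le_le_ortho_zero hvd hvd' (kz hd') (kernelMap_dmono hdK)
      have hkw : k ≫ dag w = 0 := hB w k hw.1 hk Hk
      have hwk : w ≫ dag k = 0 := dag_swap_zero hkw
      -- hence w ≤ (n ∨ k)^⊥ and w ≤ j = n ∨ k, so w = 0
      obtain ⟨NP, KP, WJ, np, kp, wj, hnp, hkp, hwj, hwjj⟩ := hj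
      have h1 : SubLE w np := factorThru hnp hwn
      have h2 : SubLE w kp := factorThru hkp hwk
      have h3 : SubLE w wj := hwj.2.2.2 w hw.1 h1 h2
      exact le_le_ortho_zero h3 hwj2 (kz hwjj) (kernelMap_dmono hwj.1)
    have key : a ≫ dag d' = 0 := hB d' a ⟨_, _, hd'⟩ ha.1 H
    have had : SubLE a d := factorThru hdd key
    exact ⟨had, hda⟩
  · -- distributive ⟹ Boolean
    intro hD M N X m n hm hn h0
    obtain ⟨Ym, fm, hfm⟩ := id hm
    obtain ⟨P, p, hp⟩ := DagKerCat.hasKer (dag m)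
    have hPK : KernelMap p := ⟨_, _, hp⟩
    have hpm : IsDagKer (dag p) m := ortho_ortho hfm hp
    obtain ⟨W0, w0, hw0⟩ := exists_meet hPK hm
    have hw00 : w0 = 0 :=
      le_le_ortho_zero hw0.2.2.1 hw0.2.1 (kz hp) (kernelMap_dmono hm)
    obtain ⟨J, j, hjk⟩ := DagKerCat.hasKer (dag w0)
    have hJoin : IsJoin m p j := ⟨P, M, W0, p, m, w0, hp, hpm, hw0, hjk⟩
    obtain ⟨A, a, haM⟩ := exists_meet hn (⟨_, _, hjk⟩ : KernelMap j)
    obtain ⟨B, b, hbM⟩ := exists_meet hn hm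
    have hb0 : b = 0 := h0 b (meet_symm hbM)
    obtain ⟨Dc, c, hcM⟩ := exists_meet hn hPK
    obtain ⟨QB, qb, hqb⟩ := DagKerCat.hasKer (dag b)
    obtain ⟨QC, qc, hqc⟩ := DagKerCat.hasKer (dag c)
    obtain ⟨W1, w1, hw1⟩ :=
      exists_meet (⟨_, _, hqb⟩ : KernelMap qb) (⟨_, _, hqc⟩ : KernelMap qc)
    obtain ⟨Dd, dd, hdk⟩ := DagKerCat.hasKer (dag w1)
    have hdJoin : IsJoin b c dd := ⟨QB, QC, W1, qb, qc, w1, hqb, hqc, hw1, hdk⟩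
    have hEq := hD n m p hn hm hPK j a b c dd hJoin haM hbM hcM hdJoin
    -- n ≤ a
    have hnj : SubLE n j := factorThru hjk (by rw [hw00, dag_zero, comp_zero])
    have hna : SubLE n a := haM.2.2.2 n hn (subLE_refl n) hnj
    -- dd ≤ c
    obtain ⟨Yc, fc, hfc⟩ := hcM.1
    have hcK : IsDagKer (dag qc) c := ortho_ortho hfc hqc
    have hqcqb : SubLE qc qb := factorThru hqb (by rw [hb0, dag_zero, comp_zero])
    have hqcw1 : SubLE qc w1 := hw1.2.2.2 qc ⟨_, _, hqc⟩ hqcqb (subLE_refl qc)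
    have hdc : SubLE dd c := by
      apply factorThru hcK
      obtain ⟨v, hv⟩ := hqcw1
      rw [← hv, dag_comp, ← Category.assoc, kz hdk, zero_comp]
    -- chain n ≤ a ≤ dd ≤ c ≤ p, hence n ⊥ m
    have hnp : SubLE n p :=
      subLE_trans (subLE_trans (subLE_trans hna hEq.1) hdc) hcM.2.2.1
    obtain ⟨u, hu⟩ := hnp
    rw [← hu, Category.assoc, kz hp, comp_zero]
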